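/- For all positive integers n and k: ∑_{m=0}^{min(n,k)} (m!)² S(n+1,m+1) S(k+1,m+1) = ∑_{m=0}^{min(n,k)} ∑_{i=0}^{n} ∑_{j=0}^{k} A(n,i) A(k,j) C(n+1-i, m+1-i) C(k+1-j, m+1-j), where A are Eulerian numbers, S Stirling numbers of the second kind, and C binomial coefficients. -/

import Mathlib

/-- Stirling numbers of the second kind: `stirling n r` is the number of
partitions of an `n`-element set into `r` non-empty blocks. -/
def stirling : ℕ → ℕ → ℕ
  | 0, 0 => 1
  | 0, _ + 1 => 0
  | _ + 1, 0 => 0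
  | n + 1, r + 1 => (r + 1) * stirling n (r + 1) + stirling n r
/-- The descent set of a permutation of `Fin k`: positions `i` (with `i+1 < k`)
such that `π i > π (i+1)`. -/
def descentSet (k : ℕ) (π : Equiv.Perm (Fin k)) : Finset (Fin (k - 1)) :=
  Finset.univ.filter fun i =>
    π ⟨i.1 + 1, by have := i.isLt; omega⟩ < π ⟨i.1, by have := i.isLt; omega⟩

/-- The Eulerian number `eulerian k j` counts permutations of `{1,…,k}`
with exactly `j - 1` descents (equivalently, `j` ascending runs). -/
def eulerian (k j : ℕ) : ℕ :=
  (Finset.univ.filter fun π : Equiv.Perm (Fin k) =>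
    (descentSet k π).card + 1 = j).card

/-! ### Auxiliary development: descents of lists -/

def ldes : List ℕ → ℕ
  | [] => 0
  | [_] => 0
  | a :: b :: t => (if b < a then 1 else 0) + ldes (b :: t)

def lgood : List ℕ → ℕ → Bool
  | l, 0 => l.isEmpty
  | [], _ + 1 => true
  | [_], _ + 1 => true
  | a :: b :: _, 1 => decide (b < a)
  | _ :: b :: t, p + 2 => lgood (b :: t) (p + 1)

def perml (n : ℕ) : Finset (List ℕ) := ((List.range n).permutations).toFinset

def Dl (n d : ℕ) : ℕ := ((perml n).filter fun l => ldes l = d).card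

def cc (n m e : ℕ) : ℕ := if e ≤ m then Nat.choose (n - e) (m - e) else 0

def Rl (n m : ℕ) : ℕ := ∑ e ∈ Finset.range n, Dl n e * cc n m e

lemma ldes_cons_cons (a b : ℕ) (t : List ℕ) :
    ldes (a :: b :: t) = (if b < a then 1 else 0) + ldes (b :: t) := rfl

lemma ldes_insertIdx (M : ℕ) : ∀ (l : List ℕ) (p : ℕ), p ≤ l.length →
    (∀ x ∈ l, x < M) →
    ldes (l.insertIdx p M) = ldes l + (if lgood l p then 0 else 1)
  | l, 0, _, hM => by
    cases l with
    | nil => simp [ldes, lgood]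
    | cons a t =>
      have : a < M := hM a (by simp)
      simp [List.insertIdx, ldes_cons_cons, lgood, this, List.isEmpty]
      omega
  | [], p + 1, hp, _ => by simp at hp
  | [a], 1, _, hM => by
    have : ¬ (M < a) := by have := hM a (by simp); omega
    simp [List.insertIdx, ldes, lgood, this]
  | a :: b :: t, 1, _, hM => by
    have h1 : ¬ (M < a) := by have := hM a (by simp); omega
    have h2 : b < M := hM b (by simp)
    simp only [List.insertIdx, ldes_cons_cons, lgood]
    simp [h1, h2, ldes_cons_cons]
    by_cases hba : b < a <;> simp [hba] <;> omega
  | a :: b :: t, p + 2, hp, hM => by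
    have hp' : p + 1 ≤ (b :: t).length := by simpa using hp
    have IH := ldes_insertIdx M (b :: t) (p + 1) hp' (fun x hx => hM x (by simp [hx]))
    have hhead : (List.insertIdx (b :: t) (p+1) M) = b :: List.insertIdx t p M := rfl
    show ldes (a :: List.insertIdx (b :: t) (p + 1) M) = _
    rw [hhead] at IH ⊢
    rw [ldes_cons_cons, IH, ldes_cons_cons]
    show _ = _ + if lgood (b :: t) (p + 1) then 0 else 1
    omega

lemma lgood_sum : ∀ l : List ℕ,
    (∑ p ∈ Finset.range (l.length + 1), if lgood l p then 1 else 0) = ldes l + 1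
  | [] => by decide
  | [a] => by
    show (∑ p ∈ Finset.range 2, if lgood [a] p then 1 else 0) = _
    rw [Finset.sum_range_succ, Finset.sum_range_one]
    simp [lgood, ldes, List.isEmpty]
  | a :: b :: t => by
    have IH := lgood_sum (b :: t)
    rw [Finset.sum_range_succ'] at IH
    simp only [lgood, List.isEmpty, if_neg Bool.false_ne_true, Bool.false_eq_true, if_false, add_zero] at IH
    show (∑ p ∈ Finset.range (t.length + 1 + 1 + 1), if lgood (a :: b :: t) p then 1 else 0) = _
    rw [Finset.sum_range_succ', Finset.sum_range_succ']
    have h0 : (if lgood (a :: b :: t) 0 then 1 else 0) = 0 := by simp [lgood, List.isEmpty]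
    have h1 : (if lgood (a :: b :: t) 1 then (1:ℕ) else 0) = if b < a then 1 else 0 := by
      simp [lgood]
    have h2 : ∀ r, (if lgood (a :: b :: t) (r + 1 + 1) then (1:ℕ) else 0)
        = if lgood (b :: t) (r + 1) then 1 else 0 := fun r => rfl
    simp only [h0, h1, h2, add_zero]
    have : (b :: t).length = t.length + 1 := rfl
    rw [this] at IH
    rw [IH]
    show _ = (if b < a then 1 else 0) + ldes (b :: t) + 1
    omega

lemma ldes_ofFn' : ∀ (n : ℕ) (f : Fin (n + 1) → ℕ),
    ldes (List.ofFn f) = ∑ i : Fin n,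
      if f ⟨i.1 + 1, by omega⟩ < f ⟨i.1, by omega⟩ then 1 else 0
  | 0, f => by simp [ldes, List.ofFn_succ]
  | n + 1, f => by
    have IH := ldes_ofFn' n (fun i => f i.succ)
    rw [List.ofFn_succ]
    have h2 : (List.ofFn fun i => f i.succ) = f 1 :: List.ofFn fun i => f i.succ.succ := by
      rw [List.ofFn_succ]; rfl
    rw [h2]
    show (if f 1 < f 0 then 1 else 0) + ldes (f 1 :: List.ofFn fun i => f i.succ.succ) = _
    rw [← h2, IH, Fin.sum_univ_succ]
    have e0 : f ⟨(0:Fin (n+1)).1 + 1, by omega⟩ = f 1 := congrArg f (Fin.ext (by simp))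
    have e0' : f ⟨(0:Fin (n+1)).1, by omega⟩ = f 0 := congrArg f (Fin.ext (by simp))
    rw [e0, e0']
    rfl

lemma mem_perml {n : ℕ} {l : List ℕ} : l ∈ perml n ↔ l.Perm (List.range n) := by
  simp [perml, List.mem_permutations]

lemma ofFn_perm (n : ℕ) (π : Equiv.Perm (Fin n)) :
    (List.ofFn fun i => (π i : ℕ)).Perm (List.range n) := by
  apply List.perm_of_nodup_nodup_toFinset_eq
  · rw [List.nodup_ofFn]
    exact fun i j h => π.injective (Fin.ext h)
  · exact List.nodup_range
  · ext x
    simp only [List.mem_toFinset, List.mem_ofFn, List.mem_range, Set.mem_range]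
    constructor
    · rintro ⟨i, rfl⟩; exact (π i).isLt
    · intro hx; exact ⟨π.symm ⟨x, hx⟩, by simp⟩

lemma descent_card_eq (n : ℕ) (π : Equiv.Perm (Fin n)) :
    ldes (List.ofFn fun i => ((π i : Fin n) : ℕ)) = (descentSet n π).card := by
  cases n with
  | zero => simp [ldes, descentSet]
  | succ m =>
    rw [ldes_ofFn' m]
    rw [descentSet, Finset.card_filter]
    rfl

lemma eulerian_eq_Dl (n d : ℕ) : eulerian n (d + 1) = Dl n d := by
  unfold eulerian Dl
  have h : (Finset.univ.filter fun π : Equiv.Perm (Fin n) => (descentSet n π).card + 1 = d + 1)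
      = Finset.univ.filter fun π => (descentSet n π).card = d := by
    apply Finset.filter_congr; intro π _; simp
  rw [h]
  apply Finset.card_bij (fun π _ => List.ofFn fun i => ((π i : Fin n) : ℕ))
  · intro π hπ
    rw [Finset.mem_filter] at hπ ⊢
    exact ⟨mem_perml.2 (ofFn_perm n π), by rw [descent_card_eq]; exact hπ.2⟩
  · intro π _ ρ _ h
    have := List.ofFn_injective h
    ext i
    exact congrArg Fin.val (Fin.ext (congrFun this i) : π i = ρ i)
  · intro l hl
    rw [Finset.mem_filter, mem_perml] at hl
    obtain ⟨hperm, hldes⟩ := hl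
    have hlen : l.length = n := hperm.length_eq.trans (List.length_range (n := n))
    have hnd : l.Nodup := hperm.nodup_iff.2 (List.nodup_range (n := n))
    have hmem : ∀ x ∈ l, x < n := fun x hx => List.mem_range.1 (hperm.mem_iff.1 hx)
    set g : Fin n → Fin n := fun i => ⟨l.get ⟨i.1, by omega⟩, hmem _ (List.get_mem l _)⟩ with hg
    have ginj : Function.Injective g := by
      intro i j hij
      have h2 := (List.Nodup.get_inj_iff hnd).1
        (show l.get ⟨i.1, by omega⟩ = l.get ⟨j.1, by omega⟩ from congrArg Fin.val hij)
      exact Fin.ext (by simpa using congrArg Fin.val h2)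
    obtain ⟨π, hπ⟩ : ∃ π : Equiv.Perm (Fin n), ∀ i, π i = g i :=
      ⟨Equiv.ofBijective g ((Fintype.bijective_iff_injective_and_card g).2 ⟨ginj, rfl⟩),
        fun i => rfl⟩
    have hofn : (List.ofFn fun i => ((π i : Fin n) : ℕ)) = l := by
      apply List.ext_get (by simp [hlen])
      intro i h1 h2
      simp only [List.get_ofFn]
      rw [hπ]
      rfl
    refine ⟨π, Finset.mem_filter.2 ⟨Finset.mem_univ _, ?_⟩, hofn⟩
    rw [← descent_card_eq, hofn, hldes]

lemma eulerian_zero (n : ℕ) : eulerian n 0 = 0 := by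
  unfold eulerian
  rw [Finset.card_eq_zero, Finset.filter_eq_empty_iff]
  intro π _
  omega

lemma erase_insertIdx (M : ℕ) : ∀ (l : List ℕ) (p : ℕ), p ≤ l.length → M ∉ l →
    (l.insertIdx p M).erase M = l
  | l, 0, _, _ => by simp [List.insertIdx]
  | [], p + 1, hp, _ => by simp at hp
  | a :: t, p + 1, hp, hM => by
    have haM : a ≠ M := fun h => hM (h ▸ List.mem_cons_self (a := a) (l := t))
    show (a :: t.insertIdx p M).erase M = a :: t
    rw [List.erase_cons_tail (by simp [haM])]
    rw [erase_insertIdx M t p (by simpa using hp) (fun h => hM (List.mem_cons_of_mem a h))]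

lemma idxOf_insertIdx (M : ℕ) : ∀ (l : List ℕ) (p : ℕ), p ≤ l.length → M ∉ l →
    (l.insertIdx p M).idxOf M = p
  | l, 0, _, _ => by simp [List.insertIdx]
  | [], p + 1, hp, _ => by simp at hp
  | a :: t, p + 1, hp, hM => by
    have haM : a ≠ M := fun h => hM (h ▸ List.mem_cons_self (a := a) (l := t))
    show (a :: t.insertIdx p M).idxOf M = p + 1
    rw [List.idxOf_cons_ne _ haM]
    rw [idxOf_insertIdx M t p (by simpa using hp) (fun h => hM (List.mem_cons_of_mem a h))]

lemma insertIdx_erase (M : ℕ) : ∀ (l : List ℕ), M ∈ l →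
    (l.erase M).insertIdx (l.idxOf M) M = l
  | a :: t, hM => by
    by_cases haM : a = M
    · subst haM
      simp [List.insertIdx]
    · rw [List.erase_cons_tail (by simp [haM]), List.idxOf_cons_ne _ haM]
      show a :: (t.erase M).insertIdx (t.idxOf M) M = a :: t
      rw [insertIdx_erase M t (by rcases List.mem_cons.1 hM with h | h; exacts [absurd h.symm haM, h])]

lemma perml_facts {n : ℕ} {l : List ℕ} (h : l ∈ perml n) :
    l.length = n ∧ (∀ x ∈ l, x < n) := by
  have hp := mem_perml.1 h
  exact ⟨hp.length_eq.trans (List.length_range (n := n)),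
    fun x hx => List.mem_range.1 (hp.mem_iff.1 hx)⟩

lemma erase_range_succ (n : ℕ) : (List.range (n+1)).erase n = List.range n := by
  rw [List.range_succ, List.erase_append_right _ (by simp), List.erase_cons_head,
    List.append_nil]

lemma sum_perml_succ (n : ℕ) (F : List ℕ → ℕ) :
    ∑ l' ∈ perml (n+1), F l' =
      ∑ l ∈ perml n, ∑ p ∈ Finset.range (n+1), F (l.insertIdx p n) := by
  rw [← Finset.sum_product']
  apply Finset.sum_nbij' (i := fun l' => (l'.erase n, l'.idxOf n))
    (j := fun lp => lp.1.insertIdx lp.2 n)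
  · intro l' hl'
    have hp := mem_perml.1 hl'
    have hmem : n ∈ l' := hp.mem_iff.2 (by simp)
    refine Finset.mem_product.2 ⟨mem_perml.2 ?_, ?_⟩
    · have := hp.erase n
      rwa [erase_range_succ] at this
    · rw [Finset.mem_range, ← hp.length_eq.trans (List.length_range (n := n+1))]
      exact List.idxOf_lt_length_iff.2 hmem
  · intro lp hlp
    rw [Finset.mem_product] at hlp
    obtain ⟨h1, h2⟩ := hlp
    obtain ⟨hlen, hlt⟩ := perml_facts h1
    have hple : lp.2 ≤ lp.1.length := by rw [hlen]; exact Nat.lt_succ_iff.1 (Finset.mem_range.1 h2)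
    apply mem_perml.2
    refine (List.perm_insertIdx n lp.1 hple).trans ?_
    refine ((mem_perml.1 h1).cons n).trans ?_
    rw [List.range_succ]
    exact (List.perm_append_singleton n (List.range n)).symm
  · intro l' hl'
    have hp := mem_perml.1 hl'
    have hmem : n ∈ l' := hp.mem_iff.2 (by simp)
    exact insertIdx_erase n l' hmem
  · intro lp hlp
    rw [Finset.mem_product] at hlp
    obtain ⟨h1, h2⟩ := hlp
    obtain ⟨hlen, hlt⟩ := perml_facts h1
    have hnotmem : n ∉ lp.1 := fun h => by have := hlt n h; omega
    have hple : lp.2 ≤ lp.1.length := by rw [hlen]; exact Nat.lt_succ_iff.1 (Finset.mem_range.1 h2)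
    exact Prod.ext (erase_insertIdx n lp.1 lp.2 hple hnotmem) (idxOf_insertIdx n lp.1 lp.2 hple hnotmem)
  · intro l' hl'
    have hp := mem_perml.1 hl'
    have hmem : n ∈ l' := hp.mem_iff.2 (by simp)
    rw [insertIdx_erase n l' hmem]

lemma ldes_le {n : ℕ} {l : List ℕ} (h : l ∈ perml n) : ldes l ≤ l.length := by
  have := lgood_sum l
  have hle : (∑ p ∈ Finset.range (l.length + 1), if lgood l p then 1 else 0)
      ≤ ∑ p ∈ Finset.range (l.length + 1), 1 := by
    apply Finset.sum_le_sum; intro p _; split <;> omega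
  rw [this, Finset.sum_const, Finset.card_range, smul_eq_mul, mul_one] at hle
  omega

lemma Dl_rec (n d : ℕ) :
    Dl (n+1) d = (d+1) * Dl n d +
      (if d = 0 then 0 else (n + 1 - d) * Dl n (d-1)) := by
  rw [Dl, Finset.card_filter, sum_perml_succ n (fun l' => if ldes l' = d then 1 else 0)]
  have step1 : ∀ l ∈ perml n,
      (∑ p ∈ Finset.range (n+1), if ldes (l.insertIdx p n) = d then 1 else 0)
        = (if ldes l = d then (ldes l + 1) else 0) +
          (if ldes l + 1 = d then n - ldes l else 0) := by
    intro l hl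
    obtain ⟨hlen, hlt⟩ := perml_facts hl
    have hld : ldes l ≤ n := hlen ▸ ldes_le hl
    have e1 : ∀ p ∈ Finset.range (n+1),
        (if ldes (l.insertIdx p n) = d then (1:ℕ) else 0)
          = if lgood l p then (if ldes l = d then 1 else 0)
            else (if ldes l + 1 = d then 1 else 0) := by
      intro p hp
      rw [ldes_insertIdx n l p (by rw [hlen]; exact Nat.lt_succ_iff.1 (Finset.mem_range.1 hp)) hlt]
      by_cases hg : lgood l p <;> simp [hg]
    rw [Finset.sum_congr rfl e1, Finset.sum_ite, Finset.sum_const, Finset.sum_const,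
      smul_eq_mul, smul_eq_mul]
    have hgc : ((Finset.range (n+1)).filter fun p => lgood l p).card = ldes l + 1 := by
      have := lgood_sum l
      rw [hlen] at this
      rw [Finset.card_filter]
      exact this
    have hbc : ((Finset.range (n+1)).filter fun p => ¬ lgood l p).card = n - ldes l := by
      have htot := Finset.card_filter_add_card_filter_not (s := Finset.range (n+1))
        (p := fun p => lgood l p = true)
      rw [Finset.card_range] at htot
      have : ((Finset.range (n+1)).filter fun p => lgood l p = true).card = ldes l + 1 := hgc
      omega
    rw [hgc, hbc]
    by_cases h1 : ldes l = d <;> by_cases h2 : ldes l + 1 = d <;> simp [h1, h2]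
  rw [Finset.sum_congr rfl step1, Finset.sum_add_distrib]
  congr 1
  · rw [Finset.sum_ite, Finset.sum_const_zero, add_zero]
    have : ∀ l ∈ (perml n).filter (fun l => ldes l = d), ldes l + 1 = d + 1 := by
      intro l hl; rw [(Finset.mem_filter.1 hl).2]
    rw [Finset.sum_congr rfl this, Finset.sum_const, smul_eq_mul, Dl, mul_comm]
  · cases d with
    | zero => simp
    | succ e =>
      rw [if_neg (by omega)]
      have e2 : ∀ l ∈ perml n, (if ldes l + 1 = e + 1 then n - ldes l else 0)
          = if ldes l = e then n - e else 0 := by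
        intro l _
        by_cases h : ldes l = e <;> simp [h]
      rw [Finset.sum_congr rfl e2, Finset.sum_ite, Finset.sum_const_zero, add_zero,
        Finset.sum_const, smul_eq_mul, Dl, mul_comm]
      congr 1
      omega

lemma key_choose (a k : ℕ) (hk : 1 ≤ k) :
    k * Nat.choose a k + k * Nat.choose a (k - 1) = (a + 1) * Nat.choose a (k - 1) := by
  obtain ⟨j, rfl⟩ : ∃ j, k = j + 1 := ⟨k - 1, by omega⟩
  have h1 := Nat.add_one_mul_choose_eq a j
  have h2 : Nat.choose (a + 1) (j + 1) = Nat.choose a j + Nat.choose a (j + 1) :=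
    Nat.choose_succ_succ a j
  simp only [Nat.add_sub_cancel]
  nlinarith [h1, h2]

lemma pointwise_id (n m e : ℕ) (he : e < n) :
    (e + 1) * cc (n + 1) m e + (n - e) * cc (n + 1) m (e + 1) =
      (m + 1) * cc n m e + m * cc n (m - 1) e := by
  rcases lt_trichotomy e m with hlt | rfl | hgt
  · have h1 : e ≤ m := le_of_lt hlt
    have h2 : e + 1 ≤ m := hlt
    have h3 : e ≤ m - 1 := by omega
    simp only [cc, if_pos h1, if_pos h2, if_pos h3]
    have hsub1 : n + 1 - e = (n - e) + 1 := by omega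
    have hsub2 : n + 1 - (e + 1) = n - e := by omega
    have hsub3 : m - (e + 1) = (m - e) - 1 := by omega
    have hsub4 : m - 1 - e = (m - e) - 1 := by omega
    rw [hsub1, hsub2, hsub3, hsub4]
    set a := n - e
    set k := m - e with hk
    have hk1 : 1 ≤ k := by omega
    have hpascal : ∀ b j, Nat.choose (b + 1) (j + 1) = Nat.choose b (j + 1) + Nat.choose b j := by
      intro b j
      rw [Nat.choose_succ_succ]; ring
    have hpascal2 : Nat.choose (a + 1) k = Nat.choose a k + Nat.choose a (k - 1) := by
      have := hpascal a (k - 1)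
      rw [show k - 1 + 1 = k by omega] at this
      omega
    have hkey := key_choose a k hk1
    have hm : m = e + k := by omega
    rw [hpascal2, hm]
    nlinarith [hkey]
  · simp only [cc, le_refl, if_pos, Nat.sub_self, Nat.choose_zero_right]
    rw [if_neg (by omega : ¬ e + 1 ≤ e)]
    have h2 : e * (if e ≤ e - 1 then Nat.choose (n - e) (e - 1 - e) else 0) = 0 := by
      rcases Nat.eq_zero_or_pos e with rfl | hpos
      · simp
      · rw [if_neg (by omega), mul_zero]
    rw [h2]
    ring
  · have h1 : ¬ e ≤ m := by omega
    have h2 : ¬ e + 1 ≤ m := by omega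
    have h3 : ¬ e ≤ m - 1 ∨ m = 0 := by omega
    simp only [cc, if_neg h1, if_neg h2, mul_zero, add_zero, zero_mul, mul_zero]
    rcases h3 with h3 | rfl
    · rw [if_neg h3]; ring
    · simp

lemma ldes_bound : ∀ (a : ℕ) (t : List ℕ), ldes (a :: t) ≤ t.length
  | _, [] => le_refl 0
  | a, b :: t => by
    rw [ldes_cons_cons]
    have := ldes_bound b t
    show _ ≤ t.length + 1
    split <;> omega

lemma Dl_top {n d : ℕ} (hn : 1 ≤ n) (hd : n ≤ d) : Dl n d = 0 := by
  rw [Dl, Finset.card_eq_zero, Finset.filter_eq_empty_iff]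
  intro l hl
  obtain ⟨hlen, _⟩ := perml_facts hl
  cases l with
  | nil => simp at hlen; omega
  | cons a t =>
    have := ldes_bound a t
    have : ldes (a :: t) ≤ t.length := this
    have hlt : (a :: t).length = t.length + 1 := rfl
    omega

lemma Rl_rec (n m : ℕ) (hn : 1 ≤ n) :
    Rl (n+1) m = (m+1) * Rl n m + m * Rl n (m-1) := by
  unfold Rl
  have expand : ∀ e ∈ Finset.range (n+1), Dl (n+1) e * cc (n+1) m e
      = (e+1) * Dl n e * cc (n+1) m e +
        (if e = 0 then 0 else (n + 1 - e) * Dl n (e-1)) * cc (n+1) m e := by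
    intro e _
    rw [Dl_rec, add_mul, mul_assoc]
  rw [Finset.sum_congr rfl expand, Finset.sum_add_distrib]
  have hA : (∑ e ∈ Finset.range (n+1), (e+1) * Dl n e * cc (n+1) m e)
      = ∑ e ∈ Finset.range n, (e+1) * Dl n e * cc (n+1) m e := by
    rw [Finset.sum_range_succ, Dl_top hn (le_refl n), mul_zero, zero_mul, add_zero]
  have hB : (∑ e ∈ Finset.range (n+1),
        (if e = 0 then 0 else (n + 1 - e) * Dl n (e-1)) * cc (n+1) m e)
      = ∑ e ∈ Finset.range n, (n - e) * Dl n e * cc (n+1) m (e+1) := by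
    rw [Finset.sum_range_succ']
    have hzero : (if (0:ℕ) = 0 then 0 else (n + 1 - 0) * Dl n (0-1)) * cc (n+1) m 0 = 0 := by
      simp
    rw [hzero, add_zero]
    apply Finset.sum_congr rfl
    intro e _
    rw [if_neg (Nat.succ_ne_zero e), show n + 1 - (e + 1) = n - e from by omega,
      Nat.add_sub_cancel]
  rw [hA, hB, ← Finset.sum_add_distrib]
  have hpt : ∀ e ∈ Finset.range n,
      (e+1) * Dl n e * cc (n+1) m e + (n - e) * Dl n e * cc (n+1) m (e+1)
        = (m+1) * (Dl n e * cc n m e) + m * (Dl n e * cc n (m-1) e) := by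
    intro e he
    have := pointwise_id n m e (Finset.mem_range.1 he)
    calc (e+1) * Dl n e * cc (n+1) m e + (n - e) * Dl n e * cc (n+1) m (e+1)
        = Dl n e * ((e + 1) * cc (n + 1) m e + (n - e) * cc (n + 1) m (e + 1)) := by ring
      _ = Dl n e * ((m + 1) * cc n m e + m * cc n (m - 1) e) := by rw [this]
      _ = (m+1) * (Dl n e * cc n m e) + m * (Dl n e * cc n (m-1) e) := by ring
  rw [Finset.sum_congr rfl hpt, Finset.sum_add_distrib, ← Finset.mul_sum, ← Finset.mul_sum]

lemma stirling_succ_one : ∀ n : ℕ, stirling (n+1) 1 = 1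
  | 0 => rfl
  | n + 1 => by
    show 1 * stirling (n+1) 1 + stirling (n+1) 0 = 1
    rw [stirling_succ_one n]
    rfl

lemma stirling_one_big (r : ℕ) : stirling 1 (r + 2) = 0 := by
  show (r + 2) * stirling 0 (r + 2) + stirling 0 (r + 1) = 0
  simp [stirling]

lemma perml_one : perml 1 = {[0]} := by
  ext l
  rw [mem_perml, Finset.mem_singleton]
  show l.Perm [0] ↔ _
  rw [List.perm_singleton]

lemma Dl_one : Dl 1 0 = 1 := by
  rw [Dl, perml_one]
  rfl

lemma L_main : ∀ n : ℕ, 1 ≤ n → ∀ m : ℕ,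
    Nat.factorial m * stirling (n+1) (m+1) = Rl n m := by
  intro n hn
  induction n, hn using Nat.le_induction with
  | base =>
    intro m
    have : Rl 1 m = Nat.choose 1 m := by
      rw [Rl, Finset.sum_range_one, Dl_one, one_mul, cc]
      simp
    rw [this]
    match m with
    | 0 => rw [stirling_succ_one 1]; rfl
    | 1 =>
      show 1 * ((1+1) * stirling 1 (1+1) + stirling 1 1) = 1
      rw [show stirling 1 (1+1) = 0 from by simp [stirling]]
      rfl
    | (q+2) =>
      rw [show stirling 2 (q+3) = (q+3) * stirling 1 (q+3) + stirling 1 (q+2) from rfl,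
        stirling_one_big, stirling_one_big q]
      rw [Nat.choose_eq_zero_of_lt (by omega)]
      ring
  | succ n hn IH =>
    intro m
    rw [Rl_rec n m hn]
    rw [show stirling (n+1+1) (m+1) = (m+1) * stirling (n+1) (m+1) + stirling (n+1) m from rfl]
    rw [Nat.mul_add]
    congr 1
    · rw [← IH m]; ring
    · match m with
      | 0 => rw [show stirling (n+1) 0 = 0 from rfl]; simp
      | q + 1 =>
        simp only [Nat.add_sub_cancel]
        rw [← IH q]
        rw [show Nat.factorial (q+1) = (q+1) * Nat.factorial q from rfl]
        show (q+1) * Nat.factorial q * stirling (n+1) (q+1) = (q+1) * (Nat.factorial q * stirling (n+1) (q+1))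
        ring

lemma euler_sum (n m : ℕ) :
    (∑ i ∈ Finset.range (n+1),
      eulerian n i * (if i ≤ m + 1 then Nat.choose (n+1-i) (m+1-i) else 0)) = Rl n m := by
  rw [Finset.sum_range_succ']
  rw [eulerian_zero, zero_mul, add_zero, Rl]
  apply Finset.sum_congr rfl
  intro e _
  rw [eulerian_eq_Dl]
  congr 1
  rw [cc]
  by_cases h : e ≤ m
  · rw [if_pos (by omega : e + 1 ≤ m + 1), if_pos h,
      show n + 1 - (e + 1) = n - e from by omega,
      show m + 1 - (e + 1) = m - e from by omega]
  · rw [if_neg (by omega : ¬ e + 1 ≤ m + 1), if_neg h]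

theorem polyBernoulli_eq_double_eulerian (n k : ℕ) (hn : 0 < n) (hk : 0 < k) :
    (∑ m ∈ Finset.range (min n k + 1),
        (Nat.factorial m) ^ 2 * stirling (n + 1) (m + 1) * stirling (k + 1) (m + 1)) =
      ∑ m ∈ Finset.range (min n k + 1), ∑ i ∈ Finset.range (n + 1), ∑ j ∈ Finset.range (k + 1),
        eulerian n i * eulerian k j *
          (if i ≤ m + 1 then Nat.choose (n + 1 - i) (m + 1 - i) else 0) *
          (if j ≤ m + 1 then Nat.choose (k + 1 - j) (m + 1 - j) else 0) := by
  apply Finset.sum_congr rfl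
  intro m _
  have hL : (Nat.factorial m) ^ 2 * stirling (n + 1) (m + 1) * stirling (k + 1) (m + 1)
      = (Nat.factorial m * stirling (n + 1) (m + 1)) *
        (Nat.factorial m * stirling (k + 1) (m + 1)) := by ring
  rw [hL, L_main n hn m, L_main k hk m, ← euler_sum n m, ← euler_sum k m,
    Finset.sum_mul_sum]
  apply Finset.sum_congr rfl
  intro i _
  apply Finset.sum_congr rfl
  intro j _
  ring
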